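/- Let (Ω, 𝓕, ℙ) be a probability space, d ≥ 1, τ ≥ 1, and let ψ_0, ψ_1, …, ψ_τ : Ω → ℝ^d be square-integrable random vectors whose second-moment structure is stationary, i.e., E[ψ_i ψ_{i+ℓ}ᵀ] = E[ψ_0 ψ_ℓᵀ] whenever 0 ≤ i and i + ℓ ≤ τ. Let γ ∈ (0,1) and λ ∈ [0,1], and define the d×d matrix A = Σ_{ℓ=0}^{τ−1} (λγ)^{ℓ} E[ ψ_{τ−1−ℓ} (ψ_{τ−1} − γ ψ_τ)ᵀ ] and M = E[ψ_0 ψ_0ᵀ]. Then for every x ∈ ℝ^d: xᵀAx ≥ ((1−γ)/(1−λγ)) (1 − (λγ)^{τ}) · xᵀMx. In particular, if M is positive definite, then every eigenvalue of A (as a complex matrix) has strictly positive real part. -/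

import Mathlib

open Matrix MeasureTheory

lemma aux_int_mul {Ω : Type*} [MeasurableSpace Ω] {μ : Measure Ω} {f g : Ω → ℝ}
    (hf : MemLp f 2 μ) (hg : MemLp g 2 μ) : Integrable (fun ω => f ω * g ω) μ := by
  have h : MemLp (g • f) 1 μ := hf.smul hg
  have := memLp_one_iff_integrable.mp h
  simpa [Pi.smul_apply, smul_eq_mul, mul_comm, Pi.mul_def] using this

lemma aux_quad_sum {d : ℕ} {ι : Type*} (s : Finset ι) (N : ι → Matrix (Fin d) (Fin d) ℝ)
    (x : Fin d → ℝ) : x ⬝ᵥ ((∑ ℓ ∈ s, N ℓ) *ᵥ x) = ∑ ℓ ∈ s, x ⬝ᵥ (N ℓ *ᵥ x) := by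
  classical
  induction s using Finset.induction with
  | empty => simp
  | insert _ _ h ih => simp [Finset.sum_insert h, Matrix.add_mulVec, dotProduct_add, ih]

theorem td_matrix_positive {Ω : Type*} [MeasurableSpace Ω] (μ : Measure Ω)
    [IsProbabilityMeasure μ] (d τ : ℕ) (hd : 1 ≤ d) (hτ : 1 ≤ τ)
    (ψ : ℕ → Ω → (Fin d → ℝ))
    (hmeas : ∀ i, i ≤ τ → ∀ a, Measurable (fun ω => ψ i ω a))
    (hL2 : ∀ i, i ≤ τ → ∀ a, MemLp (fun ω => ψ i ω a) 2 μ)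
    (E : ℕ → ℕ → Matrix (Fin d) (Fin d) ℝ)
    (hE : ∀ i j, E i j = Matrix.of (fun a b => ∫ ω, ψ i ω a * ψ j ω b ∂μ))
    (hstat : ∀ i ℓ, i + ℓ ≤ τ → E i (i + ℓ) = E 0 ℓ)
    (γ lam : ℝ) (hγ0 : 0 < γ) (hγ1 : γ < 1) (hlam0 : 0 ≤ lam) (hlam1 : lam ≤ 1)
    (A M : Matrix (Fin d) (Fin d) ℝ)
    (hA : A = ∑ ℓ ∈ Finset.range τ,
        (lam * γ) ^ ℓ • (E (τ - 1 - ℓ) (τ - 1) - γ • E (τ - 1 - ℓ) τ))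
    (hM : M = E 0 0) :
    (∀ x : Fin d → ℝ,
        ((1 - γ) / (1 - lam * γ)) * (1 - (lam * γ) ^ τ) * (x ⬝ᵥ (M *ᵥ x)) ≤
          x ⬝ᵥ (A *ᵥ x)) ∧
      (M.PosDef → ∀ z : ℂ, z ∈ spectrum ℂ (A.map (Complex.ofReal)) → 0 < z.re) := by
  set r : ℝ := lam * γ with hr
  have hr0 : 0 ≤ r := mul_nonneg hlam0 hγ0.le
  have hr1 : r < 1 := lt_of_le_of_lt (by nlinarith) hγ1
  -- ℒ² membership of the linear combinations
  have hYL2 : ∀ i, i ≤ τ → ∀ x : Fin d → ℝ,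
      MemLp (fun ω => ∑ a, x a * ψ i ω a) 2 μ := by
    intro i hi x
    have h := memLp_finset_sum' (μ := μ) (p := 2) Finset.univ
      (f := fun a (ω : Ω) => x a * ψ i ω a) (fun a _ => (hL2 i hi a).const_mul (x a))
    have heq : (fun ω => ∑ a, x a * ψ i ω a) = ∑ a : Fin d, fun ω => x a * ψ i ω a := by
      funext ω; simp
    rw [heq]; exact h
  -- quadratic form as an integral
  have hq : ∀ i j, i ≤ τ → j ≤ τ → ∀ x : Fin d → ℝ,
      x ⬝ᵥ (E i j *ᵥ x) =
        ∫ ω, (∑ a, x a * ψ i ω a) * (∑ b, x b * ψ j ω b) ∂μ := by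
    intro i j hi hj x
    have hint : ∀ a b : Fin d,
        Integrable (fun ω => (x a * ψ i ω a) * (x b * ψ j ω b)) μ := by
      intro a b
      have := ((hL2 i hi a).const_mul (x a))
      have := aux_int_mul ((hL2 i hi a).const_mul (x a)) ((hL2 j hj b).const_mul (x b))
      exact this
    have h1 : (∫ ω, (∑ a, x a * ψ i ω a) * (∑ b, x b * ψ j ω b) ∂μ)
        = ∑ a, ∑ b, ∫ ω, (x a * ψ i ω a) * (x b * ψ j ω b) ∂μ := by
      simp_rw [Finset.sum_mul_sum]
      rw [integral_finset_sum _ (fun a _ => integrable_finset_sum _ (fun b _ => hint a b))]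
      exact Finset.sum_congr rfl fun a _ => integral_finset_sum _ (fun b _ => hint a b)
    rw [h1, hE]
    simp only [dotProduct, mulVec, Matrix.of_apply]
    refine Finset.sum_congr rfl fun a _ => ?_
    rw [Finset.mul_sum]
    refine Finset.sum_congr rfl fun b _ => ?_
    have h2 : (fun ω => (x a * ψ i ω a) * (x b * ψ j ω b))
        = fun ω => (x a * x b) * (ψ i ω a * ψ j ω b) := by funext ω; ring
    rw [h2, integral_const_mul]
    ring
  -- Cauchy–Schwarz-type bound
  have hcs : ∀ i j, i ≤ τ → j ≤ τ → ∀ x : Fin d → ℝ,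
      x ⬝ᵥ (E i j *ᵥ x) ≤ x ⬝ᵥ (E 0 0 *ᵥ x) := by
    intro i j hi hj x
    set F : Ω → ℝ := fun ω => ∑ a, x a * ψ i ω a with hF
    set G : Ω → ℝ := fun ω => ∑ a, x a * ψ j ω a with hG
    have hFL2 := hYL2 i hi x
    have hGL2 := hYL2 j hj x
    have hFF : Integrable (fun ω => F ω * F ω) μ := aux_int_mul hFL2 hFL2
    have hGG : Integrable (fun ω => G ω * G ω) μ := aux_int_mul hGL2 hGL2
    have hFG : Integrable (fun ω => F ω * G ω) μ := aux_int_mul hFL2 hGL2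
    have hii : x ⬝ᵥ (E i i *ᵥ x) = x ⬝ᵥ (E 0 0 *ᵥ x) := by
      have := hstat i 0 (by omega); rw [Nat.add_zero] at this; rw [this]
    have hjj : x ⬝ᵥ (E j j *ᵥ x) = x ⬝ᵥ (E 0 0 *ᵥ x) := by
      have := hstat j 0 (by omega); rw [Nat.add_zero] at this; rw [this]
    have key : ∫ ω, F ω * G ω ∂μ ≤
        (∫ ω, F ω * F ω ∂μ + ∫ ω, G ω * G ω ∂μ) / 2 := by
      rw [← integral_add hFF hGG, ← integral_div]
      refine integral_mono hFG ((hFF.add hGG).div_const 2) fun ω => ?_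
      have := sq_nonneg (F ω - G ω)
      simp only [Pi.add_apply, Pi.div_apply]
      nlinarith
    have e1 := hq i j hi hj x
    have e2 := hq i i hi hi x
    have e3 := hq j j hj hj x
    rw [e1]
    calc ∫ ω, F ω * G ω ∂μ ≤ (∫ ω, F ω * F ω ∂μ + ∫ ω, G ω * G ω ∂μ) / 2 := key
      _ = (x ⬝ᵥ (E i i *ᵥ x) + x ⬝ᵥ (E j j *ᵥ x)) / 2 := by rw [e2, e3]
      _ = x ⬝ᵥ (E 0 0 *ᵥ x) := by rw [hii, hjj]; ring
  -- main quadratic inequality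
  have hmain : ∀ x : Fin d → ℝ,
      ((1 - γ) / (1 - r)) * (1 - r ^ τ) * (x ⬝ᵥ (M *ᵥ x)) ≤ x ⬝ᵥ (A *ᵥ x) := by
    intro x
    set c : ℕ → ℝ := fun ℓ => x ⬝ᵥ (E 0 ℓ *ᵥ x) with hc
    have hcle : ∀ ℓ, ℓ ≤ τ → c ℓ ≤ c 0 := by
      intro ℓ hℓ
      have := hcs 0 ℓ (by omega) hℓ x
      simpa [hc] using this
    have hAq : x ⬝ᵥ (A *ᵥ x) = ∑ ℓ ∈ Finset.range τ, r ^ ℓ * (c ℓ - γ * c (ℓ + 1)) := by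
      rw [hA, aux_quad_sum]
      refine Finset.sum_congr rfl fun ℓ hℓ => ?_
      have hℓτ : ℓ < τ := Finset.mem_range.mp hℓ
      have e1 : E (τ - 1 - ℓ) (τ - 1) = E 0 ℓ := by
        have := hstat (τ - 1 - ℓ) ℓ (by omega)
        rwa [show τ - 1 - ℓ + ℓ = τ - 1 by omega] at this
      have e2 : E (τ - 1 - ℓ) τ = E 0 (ℓ + 1) := by
        have := hstat (τ - 1 - ℓ) (ℓ + 1) (by omega)
        rwa [show τ - 1 - ℓ + (ℓ + 1) = τ by omega] at this
      rw [e1, e2, Matrix.smul_mulVec, dotProduct_smul, Matrix.sub_mulVec,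
        dotProduct_sub, Matrix.smul_mulVec, dotProduct_smul]
      simp only [smul_eq_mul, hc]
    have hMq : x ⬝ᵥ (M *ᵥ x) = c 0 := by rw [hM]
    have hg : ∀ ℓ ∈ Finset.range τ,
        r ^ (ℓ+1) * (c 0 - c (ℓ+1)) - r ^ ℓ * (c 0 - c ℓ) ≤
          r ^ ℓ * (c ℓ - γ * c (ℓ+1)) - (1 - γ) * r ^ ℓ * c 0 := by
      intro ℓ hℓ
      have hℓτ : ℓ < τ := Finset.mem_range.mp hℓ
      have h1 : 0 ≤ c 0 - c (ℓ+1) := by have := hcle (ℓ+1) (by omega); linarith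
      have hpow : 0 ≤ r ^ ℓ := pow_nonneg hr0 ℓ
      have hstep : r ^ (ℓ+1) * (c 0 - c (ℓ+1)) ≤ r ^ ℓ * γ * (c 0 - c (ℓ+1)) := by
        apply mul_le_mul_of_nonneg_right _ h1
        rw [pow_succ]
        have hrγ : r ≤ γ := by nlinarith
        nlinarith
      have hid : r ^ ℓ * (c ℓ - γ * c (ℓ+1)) - (1 - γ) * r ^ ℓ * c 0
          = r ^ ℓ * γ * (c 0 - c (ℓ+1)) - r ^ ℓ * (c 0 - c ℓ) := by ring
      rw [hid]; linarith
    have htel := Finset.sum_le_sum hg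
    rw [Finset.sum_range_sub (fun ℓ => r ^ ℓ * (c 0 - c ℓ))] at htel
    have hsplit : ∑ ℓ ∈ Finset.range τ, (r ^ ℓ * (c ℓ - γ * c (ℓ+1)) - (1 - γ) * r ^ ℓ * c 0)
        = (x ⬝ᵥ (A *ᵥ x)) - (1 - γ) * (∑ ℓ ∈ Finset.range τ, r ^ ℓ) * c 0 := by
      rw [Finset.sum_sub_distrib, hAq, Finset.mul_sum, Finset.sum_mul]
    rw [hsplit] at htel
    have htail : 0 ≤ r ^ τ * (c 0 - c τ) - r ^ 0 * (c 0 - c 0) := by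
      have h1 : 0 ≤ c 0 - c τ := by have := hcle τ le_rfl; linarith
      have : 0 ≤ r ^ τ * (c 0 - c τ) := mul_nonneg (pow_nonneg hr0 τ) h1
      simpa using this
    have hfinal : (1 - γ) * (∑ ℓ ∈ Finset.range τ, r ^ ℓ) * c 0 ≤ x ⬝ᵥ (A *ᵥ x) := by
      linarith
    have h1r : (1:ℝ) - r ≠ 0 := by linarith
    have hSgeom : ∑ ℓ ∈ Finset.range τ, r ^ ℓ = (1 - r ^ τ) / (1 - r) := by
      rw [geom_sum_eq hr1.ne]
      rw [div_eq_div_iff (by intro h; apply hr1.ne; linarith) h1r]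
      ring
    rw [hMq]
    calc ((1 - γ) / (1 - r)) * (1 - r ^ τ) * c 0
        = (1 - γ) * ((1 - r ^ τ) / (1 - r)) * c 0 := by ring
      _ = (1 - γ) * (∑ ℓ ∈ Finset.range τ, r ^ ℓ) * c 0 := by rw [hSgeom]
      _ ≤ x ⬝ᵥ (A *ᵥ x) := hfinal
  refine ⟨hmain, fun hMpd z hz => ?_⟩
  -- positivity of the quadratic form of A
  have hκ : 0 < (1 - γ) / (1 - r) * (1 - r ^ τ) := by
    have h1 : 0 < 1 - r := by linarith
    have h2 : r ^ τ < 1 := pow_lt_one₀ hr0 hr1 (by omega)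
    have h3 : 0 < (1 - γ) / (1 - r) := div_pos (by linarith) h1
    nlinarith
  have hposA : ∀ x : Fin d → ℝ, x ≠ 0 → 0 < x ⬝ᵥ (A *ᵥ x) := by
    intro x hx
    have hMx : 0 < x ⬝ᵥ (M *ᵥ x) := by
      have := hMpd.dotProduct_mulVec_pos hx
      simpa using this
    calc (0:ℝ) < (1 - γ) / (1 - r) * (1 - r ^ τ) * (x ⬝ᵥ (M *ᵥ x)) := mul_pos hκ hMx
      _ ≤ x ⬝ᵥ (A *ᵥ x) := hmain x
  have hnnA : ∀ x : Fin d → ℝ, 0 ≤ x ⬝ᵥ (A *ᵥ x) := by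
    intro x
    have hMx : 0 ≤ x ⬝ᵥ (M *ᵥ x) := by simpa using hMpd.posSemidef.dotProduct_mulVec_nonneg x
    exact le_trans (mul_nonneg hκ.le hMx) (hmain x)
  -- extract an eigenvector
  have hz' : z ∈ spectrum ℂ (Matrix.toLinAlgEquiv' (A.map Complex.ofReal)) := by
    rwa [AlgEquiv.spectrum_eq]
  have hev : Module.End.HasEigenvalue (Matrix.toLinAlgEquiv' (A.map Complex.ofReal)) z :=
    Module.End.hasEigenvalue_iff_mem_spectrum.mpr hz'
  obtain ⟨v, hv⟩ := hev.exists_hasEigenvector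
  have hveq : ∀ a, (∑ b, (A a b : ℂ) * v b) = z * v a := by
    intro a
    have h1 : (A.map Complex.ofReal) *ᵥ v = z • v := by
      have h2 := hv.apply_eq_smul
      rwa [Matrix.toLinAlgEquiv'_apply] at h2
    have h3 := congrFun h1 a
    simpa [Matrix.mulVec, dotProduct, Matrix.map_apply] using h3
  set u : Fin d → ℝ := fun a => (v a).re with hu
  set w : Fin d → ℝ := fun a => (v a).im with hw
  have hre : ∀ a, (∑ b, A a b * u b) = z.re * u a - z.im * w a := by
    intro a
    have h1 := congrArg Complex.re (hveq a)
    simpa [Complex.re_sum, Complex.mul_re, hu, hw] using h1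
  have him : ∀ a, (∑ b, A a b * w b) = z.re * w a + z.im * u a := by
    intro a
    have h1 := congrArg Complex.im (hveq a)
    simpa [Complex.im_sum, Complex.mul_im, hu, hw] using h1
  have hkey : (u ⬝ᵥ (A *ᵥ u)) + (w ⬝ᵥ (A *ᵥ w))
      = z.re * (∑ a, (u a ^ 2 + w a ^ 2)) := by
    simp only [dotProduct, mulVec]
    rw [← Finset.sum_add_distrib, Finset.mul_sum]
    refine Finset.sum_congr rfl fun a _ => ?_
    rw [hre a, him a]
    ring
  have hn : 0 < ∑ a, (u a ^ 2 + w a ^ 2) := by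
    obtain ⟨a, ha⟩ : ∃ a, v a ≠ 0 := by
      by_contra h; push_neg at h; exact hv.2 (funext h)
    refine Finset.sum_pos' (fun b _ => by positivity) ⟨a, Finset.mem_univ a, ?_⟩
    have h1 : u a ≠ 0 ∨ w a ≠ 0 := by
      by_contra h; push_neg at h; exact ha (Complex.ext h.1 h.2)
    rcases h1 with h | h
    · have : 0 < u a ^ 2 := by positivity
      nlinarith [sq_nonneg (w a)]
    · have : 0 < w a ^ 2 := by positivity
      nlinarith [sq_nonneg (u a)]
  have hP : 0 < u ⬝ᵥ (A *ᵥ u) + w ⬝ᵥ (A *ᵥ w) := by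
    obtain ⟨a, ha⟩ : ∃ a, v a ≠ 0 := by
      by_contra h; push_neg at h; exact hv.2 (funext h)
    have h1 : u a ≠ 0 ∨ w a ≠ 0 := by
      by_contra h; push_neg at h; exact ha (Complex.ext h.1 h.2)
    rcases h1 with h | h
    · have hu0 : u ≠ 0 := fun h0 => h (congrFun h0 a)
      have := hposA u hu0; have := hnnA w; linarith
    · have hw0 : w ≠ 0 := fun h0 => h (congrFun h0 a)
      have := hnnA u; have := hposA w hw0; linarith
  rw [hkey] at hP
  by_contra hzr
  push_neg at hzr
  nlinarith
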